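/- Every 4-uniform B_4-saturated hypergraph on 7 vertices has at least 7 hyperedges, i.e., sat_4(7, B_4) ≥ 7. -/

import Mathlib

/-- Every 4-uniform `B₄`-saturated hypergraph on 7 vertices has at least 7
hyperedges: `sat₄(7, B₄) ≥ 7`. -/
theorem stmt6 (E : Finset (Finset (Fin 7)))
    (huniform : ∀ e ∈ E, e.card = 4)
    (hfree : ∀ e ∈ E, ∀ f ∈ E, e ≠ f → (e ∩ f).card ≠ 1)
    (hsat : ∀ A : Finset (Fin 7), A.card = 4 → A ∉ E → ∃ e ∈ E, (A ∩ e).card = 1) :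
    7 ≤ E.card := by
  classical
  set T := (Finset.univ : Finset (Fin 7)).powersetCard 4 with hT
  have hTcard : T.card = 35 := by
    rw [hT, Finset.card_powersetCard, Finset.card_univ, Fintype.card_fin]
    decide
  have hmemT : ∀ A : Finset (Fin 7), A ∈ T ↔ A.card = 4 := by
    intro A
    simp [hT, Finset.mem_powersetCard]
  have key : ∀ e ∈ E, (T.filter fun A => (A ∩ e).card = 1).card ≤ 4 := by
    intro e he
    have hec : e.card = 4 := huniform e he
    have hcompl : (Finset.univ \ e).card = 3 := by
      rw [Finset.card_sdiff_of_subset (Finset.subset_univ _), Finset.card_univ, Fintype.card_fin, hec]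
    have hA_eq : ∀ A ∈ T.filter (fun A => (A ∩ e).card = 1),
        A = (A ∩ e) ∪ (Finset.univ \ e) := by
      intro A hA
      rw [Finset.mem_filter, hmemT] at hA
      have hdiff : A \ e = Finset.univ \ e := by
        apply Finset.eq_of_subset_of_card_le
        · exact Finset.sdiff_subset_sdiff (Finset.subset_univ _) le_rfl
        · have h1 : (A ∩ e).card + (A \ e).card = A.card :=
            Finset.card_inter_add_card_sdiff A e
          omega
      have hAe : A ∩ e ∪ A \ e = A := by
        ext x; simp only [Finset.mem_union, Finset.mem_inter, Finset.mem_sdiff]; tauto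
      rw [hdiff] at hAe; exact hAe.symm
    have := Finset.card_le_card_of_injOn
      (f := fun A => if h : (A ∩ e).Nonempty then h.choose else 0)
      (s := T.filter fun A => (A ∩ e).card = 1) (t := e)
      (by
        intro A hA
        have hA' := hA
        rw [Finset.mem_coe, Finset.mem_filter] at hA'
        have hne : (A ∩ e).Nonempty := Finset.card_pos.mp (by rw [hA'.2]; norm_num)
        simp only [dif_pos hne]
        exact (Finset.mem_inter.mp hne.choose_spec).2)
      (by
        intro A hA B hB hAB
        simp only [Finset.mem_coe] at hA hB
        have hA' := hA; have hB' := hB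
        rw [Finset.mem_filter] at hA' hB'
        obtain ⟨v, hv⟩ := Finset.card_eq_one.mp hA'.2
        obtain ⟨w, hw⟩ := Finset.card_eq_one.mp hB'.2
        have hneA : (A ∩ e).Nonempty := by rw [hv]; exact Finset.singleton_nonempty v
        have hneB : (B ∩ e).Nonempty := by rw [hw]; exact Finset.singleton_nonempty w
        simp only [dif_pos hneA, dif_pos hneB] at hAB
        have hvw : v = w := by
          have h1 : hneA.choose = v := by
            exact Finset.mem_singleton.mp (Finset.mem_of_subset hv.le hneA.choose_spec)
          have h2 : hneB.choose = w := by
            exact Finset.mem_singleton.mp (Finset.mem_of_subset hw.le hneB.choose_spec)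
          rw [h1, h2] at hAB; exact hAB
        rw [hA_eq A hA, hA_eq B hB, hv, hw, hvw])
    omega
  have hsplit : (T.filter (· ∈ E)).card + (T.filter (· ∉ E)).card = T.card :=
    Finset.card_filter_add_card_filter_not _
  have h1 : (T.filter (· ∈ E)).card ≤ E.card :=
    Finset.card_le_card (fun A hA => (Finset.mem_filter.mp hA).2)
  have h2 : T.filter (· ∉ E) ⊆ E.biUnion (fun e => T.filter fun A => (A ∩ e).card = 1) := by
    intro A hA
    rw [Finset.mem_filter] at hA
    have hA4 : A.card = 4 := (hmemT A).mp hA.1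
    obtain ⟨e, he, hcard⟩ := hsat A hA4 hA.2
    exact Finset.mem_biUnion.mpr ⟨e, he, Finset.mem_filter.mpr ⟨hA.1, hcard⟩⟩
  have h3 : (T.filter (· ∉ E)).card ≤ 4 * E.card := by
    calc (T.filter (· ∉ E)).card
        ≤ (E.biUnion (fun e => T.filter fun A => (A ∩ e).card = 1)).card :=
          Finset.card_le_card h2
      _ ≤ ∑ e ∈ E, (T.filter fun A => (A ∩ e).card = 1).card := Finset.card_biUnion_le
      _ ≤ ∑ e ∈ E, 4 := Finset.sum_le_sum key
      _ = 4 * E.card := by rw [Finset.sum_const, smul_eq_mul, mul_comm]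
  omega
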